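/- Let d ≥ 2 be even and let m > 0 be a real number. Then the standard basis vector e_0 ∈ ℝ^{d+1} belongs to the simplex S(d,m) if and only if c_{d−1}(m) ≤ m^{d−1}. -/

import Mathlib

/-- The `i`-th vertex of the circulant simplex `S(d,m)` for real `m` (coordinates indexed
by `Fin (d+1)`, i.e. modulo `d+1`): coordinate `j` is `1` if `j = i`, `m` if `j ≡ i+1`,
`-m` if `j ≡ i-1`, and `0` otherwise. -/
def vvecR (d : ℕ) (m : ℝ) (i : Fin (d+1)) : Fin (d+1) → ℝ :=
  fun j => if j = i then 1 else if j = i + 1 then m else if j = i - 1 then -m else 0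

/-- Shifted continuant numbers: `cseq m n = c_{n-1}(m)`, where `c_{-1} = 0`, `c_0 = 1`
and `c_k = c_{k-1} + m^2 c_{k-2}` for `k ≥ 1`. -/
noncomputable def cseq (m : ℝ) : ℕ → ℝ
  | 0 => 0
  | 1 => 1
  | (n+2) => cseq m (n+1) + m ^ 2 * cseq m n

lemma cseq_zero (m : ℝ) : cseq m 0 = 0 := rfl
lemma cseq_one (m : ℝ) : cseq m 1 = 1 := rfl
lemma cseq_rec (m : ℝ) (n : ℕ) : cseq m (n+2) = cseq m (n+1) + m ^ 2 * cseq m n := rfl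
lemma cseq_two (m : ℝ) : cseq m 2 = 1 := by rw [cseq_rec, cseq_one, cseq_zero]; ring

lemma cseq_nonneg (m : ℝ) : ∀ n, 0 ≤ cseq m n
  | 0 => le_refl 0
  | 1 => by rw [cseq_one]; norm_num
  | (n+2) => by
      have h1 := cseq_nonneg m (n+1)
      have h2 := cseq_nonneg m n
      rw [cseq_rec]; positivity

lemma one_le_cseq (m : ℝ) : ∀ n, 1 ≤ cseq m (n+1)
  | 0 => by rw [cseq_one]
  | (n+1) => by
      have h1 := one_le_cseq m n
      have h2 := cseq_nonneg m n
      rw [cseq_rec]; nlinarith [sq_nonneg m]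

lemma cseq_det (m : ℝ) : ∀ k, cseq m (k+2) * cseq m k - (cseq m (k+1))^2 = (-1)^(k+1) * m^(2*k)
  | 0 => by rw [cseq_two, cseq_zero, cseq_one]; norm_num
  | (k+1) => by
      have ih := cseq_det m k
      have e1 : cseq m (k+3) = cseq m (k+2) + m^2 * cseq m (k+1) := cseq_rec m (k+1)
      have e2 : cseq m (k+2) = cseq m (k+1) + m^2 * cseq m k := cseq_rec m k
      show cseq m (k+3) * cseq m (k+1) - (cseq m (k+2))^2 = (-1)^(k+2) * m^(2*k+2)
      rw [e1, e2, show (-1:ℝ)^(k+2) = (-1)^(k+1) * (-1) from pow_succ _ _,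
        show m^(2*k+2) = m^(2*k) * m^2 from pow_add _ _ _]
      rw [e2] at ih
      linear_combination (-(m^2)) * ih

noncomputable def Dq (d : ℕ) (m : ℝ) : ℝ := 2*m^2*cseq m d + cseq m (d+1)

noncomputable def Nf (d : ℕ) (m : ℝ) (j : ℕ) : ℝ :=
  cseq m (d+1) * cseq m j + (m^(d-1) - cseq m d) * cseq m (j+1)

lemma Dq_pos (d : ℕ) (m : ℝ) : 0 < Dq d m := by
  have h1 := one_le_cseq m d
  have h2 := cseq_nonneg m d
  have h3 := sq_nonneg m
  unfold Dq
  nlinarith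

lemma Nf_rec (d : ℕ) (m : ℝ) (j : ℕ) : Nf d m (j+2) = Nf d m (j+1) + m^2 * Nf d m j := by
  unfold Nf
  rw [show j+2+1 = j+3 from rfl, show j+1+1 = j+2 from rfl,
    cseq_rec m (j+1), cseq_rec m j]
  ring

lemma Nf_zero (d : ℕ) (m : ℝ) : Nf d m 0 = m^(d-1) - cseq m d := by
  unfold Nf; rw [cseq_zero, cseq_one]; ring

lemma Nf_one (d : ℕ) (m : ℝ) : Nf d m 1 = cseq m (d+1) + (m^(d-1) - cseq m d) := by
  unfold Nf; rw [cseq_one, cseq_two]; ring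

lemma Nf_nonneg (d : ℕ) (m : ℝ) (hβ : cseq m d ≤ m^(d-1)) (j : ℕ) : 0 ≤ Nf d m j := by
  have h1 := cseq_nonneg m (d+1)
  have h2 := cseq_nonneg m j
  have h3 := cseq_nonneg m (j+1)
  unfold Nf
  nlinarith

noncomputable def wf (d : ℕ) (m : ℝ) (j : Fin (d+1)) : ℝ :=
  if j.val = 0 then cseq m (d+1) / Dq d m
  else Nf d m (j.val - 1) * m^(d+1 - j.val) / (Dq d m * m^(d-1))

lemma wf_nonneg (d : ℕ) (m : ℝ) (hm : 0 < m) (hβ : cseq m d ≤ m^(d-1)) (j : Fin (d+1)) :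
    0 ≤ wf d m j := by
  unfold wf
  have hD := Dq_pos d m
  split_ifs
  · have := cseq_nonneg m (d+1); positivity
  · have := Nf_nonneg d m hβ (j.val - 1); positivity

lemma wkey (d : ℕ) (hd : 2 ≤ d) (hde : Even d) (m : ℝ) (hm : 0 < m) (i : Fin (d+1)) :
    wf d m i + m * wf d m (i-1) - m * wf d m (i+1) = if i = 0 then 1 else 0 := by
  obtain ⟨k, rfl⟩ : ∃ k, d = k + 2 := ⟨d - 2, by omega⟩
  have hm0 : m ≠ 0 := ne_of_gt hm
  have hD0 : Dq (k+2) m ≠ 0 := ne_of_gt (Dq_pos _ m)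
  rcases eq_or_ne i 0 with h0 | h0
  · -- i = 0
    subst h0
    have hv1 : ((0 : Fin (k+3)) + 1).val = 1 := by
      rw [zero_add]; exact Fin.val_one (k+1)
    have hv2 : ((0 : Fin (k+3)) - 1).val = k + 2 := by
      rw [Fin.coe_sub_one, if_pos rfl]
    have hdet : cseq m (k+3) * cseq m (k+1) - (cseq m (k+2))^2 = m^(2*k+2) := by
      have h := cseq_det m (k+1)
      have he : (-1 : ℝ)^(k+2) = 1 := (by simpa using hde : Even (k+2)).neg_one_pow
      rw [show k+1+2 = k+3 from rfl, show k+1+1 = k+2 from rfl, he, one_mul,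
        show 2*(k+1) = 2*k+2 from rfl] at h
      exact h
    simp only [wf, hv1, hv2, Fin.val_zero, if_pos rfl, if_neg (by omega : ¬ k+2 = 0),
      if_neg (by omega : ¬ 1 = 0), Nf, cseq_zero, cseq_one,
      show k+2+1 = k+3 from rfl, show k+1+1 = k+2 from rfl,
      show k+2-1 = k+1 from by omega, show k+3-(k+2) = 1 from by omega,
      show k+3-1 = k+2 from by omega, show (0:ℕ)+1 = 1 from rfl,
      show (1:ℕ)-1 = 0 from rfl, pow_one, ↓reduceIte]
    have hDdef : Dq (k+2) m = 2*m^2*cseq m (k+2) + cseq m (k+3) := rfl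
    field_simp
    linear_combination (m^2) * hdet
      - (m*m^k) * hDdef
  · rcases eq_or_ne i (Fin.last (k+2)) with hl | hl
    · -- i = last
      have hval : i.val = k + 2 := by rw [hl]; rfl
      have hv1 : (i + 1).val = 0 := by rw [Fin.val_add_one, if_pos hl]
      have hv2 : (i - 1).val = k + 1 := by rw [Fin.coe_sub_one, if_neg h0, hval]; omega
      have hrec := Nf_rec (k+2) m k
      have hNd : Nf (k+2) m (k+2) = cseq m (k+3) * m^(k+1) := by
        simp only [Nf, show k+2+1 = k+3 from rfl, show k+2-1 = k+1 from by omega]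
        ring
      rw [hNd] at hrec
      simp only [wf, hv1, hv2, hval, if_neg h0, if_pos rfl,
        if_neg (by omega : ¬ k+2 = 0), if_neg (by omega : ¬ k+1 = 0),
        show k+2+1 = k+3 from rfl, show k+1+1 = k+2 from rfl,
        show k+2-1 = k+1 from by omega, show k+1-1 = k from by omega,
        show k+3-(k+2) = 1 from by omega, show k+3-(k+1) = 2 from by omega, pow_one, ↓reduceIte]
      field_simp
      linear_combination (-m) * hrec
    · -- middle
      have hlt : i.val < k + 2 := by
        have h1 := i.isLt
        rcases Nat.lt_or_ge i.val (k+2) with h | h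
        · exact h
        · exact absurd (Fin.ext (by simp [Fin.last]; omega : i.val = (Fin.last (k+2)).val)) hl
      have hpos : 0 < i.val := Nat.pos_of_ne_zero (fun h => h0 (Fin.ext h))
      have hv1 : (i + 1).val = i.val + 1 := by rw [Fin.val_add_one, if_neg hl]
      have hv2 : (i - 1).val = i.val - 1 := by rw [Fin.coe_sub_one, if_neg h0]
      rcases Nat.lt_or_ge i.val 2 with h2 | h2
      · -- i.val = 1
        have hval : i.val = 1 := by omega
        rw [hval] at hv1 hv2
        simp only [wf, hv1, hv2, hval, if_neg h0, if_pos rfl,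
          if_neg (by omega : ¬ (1:ℕ) = 0), if_neg (by omega : ¬ (1:ℕ)+1 = 0),
          show (1:ℕ)-1 = 0 from rfl, show (1:ℕ)+1-1 = 1 from rfl,
          show k+3-1 = k+2 from by omega, show k+3-(1+1) = k+1 from by omega,
          Nf_zero, Nf_one, ↓reduceIte]
        field_simp
        ring_nf
        rw [show 2+k-1 = k+1 from by omega]
        ring
      · -- 2 ≤ i.val < k+2
        obtain ⟨b, hval⟩ : ∃ b, i.val = b + 2 := ⟨i.val - 2, by omega⟩
        obtain ⟨r, rfl⟩ : ∃ r, k = b + 1 + r := ⟨k - b - 1, by omega⟩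
        rw [hval] at hv1 hv2
        have hrec := Nf_rec (b+1+r+2) m b
        simp only [wf, hv1, hv2, hval, if_neg h0,
          if_neg (by omega : ¬ b+2 = 0), if_neg (by omega : ¬ b+1 = 0),
          if_neg (by omega : ¬ b+2+1 = 0),
          show b+2-1 = b+1 from by omega, show b+1-1 = b from by omega,
          show b+2+1-1 = b+2 from by omega,
          show b+1+r+2+1-(b+2) = r+2 from by omega,
          show b+1+r+2+1-(b+1) = r+3 from by omega,
          show b+1+r+2+1-(b+2+1) = r+1 from by omega]
        field_simp
        linear_combination (-(m^(r+1) * m)) * hrec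

lemma sum_coord (d : ℕ) (hd : 2 ≤ d) (m : ℝ) (μ : Fin (d+1) → ℝ) (p : Fin (d+1)) :
    ∑ j, μ j * vvecR d m j p = μ p + m * μ (p-1) - m * μ (p+1) := by
  have hp := p.isLt
  have hv1' : (p + 1).val = if p.val = d then 0 else p.val + 1 := by
    rw [Fin.val_add_one]
    by_cases h : p = Fin.last d
    · rw [if_pos h, if_pos (by rw [h]; rfl)]
    · rw [if_neg h,
        if_neg (show ¬ p.val = d from fun hv => h (Fin.ext (show p.val = (Fin.last d).val from hv)))]
  have hv2' : (p - 1).val = if p.val = 0 then d else p.val - 1 := by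
    rw [Fin.coe_sub_one]
    by_cases h : p = 0
    · rw [if_pos h, if_pos (by rw [h]; rfl)]
    · rw [if_neg h,
        if_neg (show ¬ p.val = 0 from fun hv => h (Fin.ext (show p.val = ((0 : Fin (d+1))).val from hv)))]
  have hne1 : p ≠ p - 1 := fun h => by
    have hval := congrArg Fin.val h; rw [hv2'] at hval; split_ifs at hval <;> omega
  have hne2 : p ≠ p + 1 := fun h => by
    have hval := congrArg Fin.val h; rw [hv1'] at hval; split_ifs at hval <;> omega
  have hne3 : p - 1 ≠ p + 1 := fun h => by
    have hval := congrArg Fin.val h; rw [hv2', hv1'] at hval; split_ifs at hval <;> omega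
  have hpt : ∀ j : Fin (d+1), μ j * vvecR d m j p
      = (if p = j then μ j else 0) + m * (if p - 1 = j then μ j else 0)
        - m * (if p + 1 = j then μ j else 0) := by
    intro j
    have e2 : (p = j + 1) ↔ (p - 1 = j) := sub_eq_iff_eq_add.symm
    have e3 : (p = j - 1) ↔ (p + 1 = j) := by
      constructor
      · intro h; rw [h]; exact sub_add_cancel j 1
      · intro h; rw [← h]; exact (add_sub_cancel_right p 1).symm
    simp only [vvecR, e2, e3]
    by_cases h1 : p = j
    · have h2 : ¬(p - 1 = j) := fun h => hne1 (h1.trans h.symm)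
      have h3 : ¬(p + 1 = j) := fun h => hne2 (h1.trans h.symm)
      simp only [if_pos h1, if_neg h2, if_neg h3]; ring
    · by_cases h2 : p - 1 = j
      · have h3 : ¬(p + 1 = j) := fun h => hne3 (h2.trans h.symm)
        simp only [if_pos h2, if_neg h1, if_neg h3]; ring
      · by_cases h3 : p + 1 = j
        · simp only [if_pos h3, if_neg h1, if_neg h2]; ring
        · simp only [if_neg h1, if_neg h2, if_neg h3]; ring
  rw [Finset.sum_congr rfl (fun j _ => hpt j)]
  rw [Finset.sum_sub_distrib, Finset.sum_add_distrib, ← Finset.mul_sum, ← Finset.mul_sum]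
  simp [Finset.sum_ite_eq]

lemma wf_sum (d : ℕ) (hd : 2 ≤ d) (hde : Even d) (m : ℝ) (hm : 0 < m) :
    ∑ j, wf d m j = 1 := by
  have h1 : ∑ i : Fin (d+1), (wf d m i + m * wf d m (i-1) - m * wf d m (i+1)) = 1 := by
    rw [Finset.sum_congr rfl (fun i _ => wkey d hd hde m hm i)]
    simp
  have h2 : ∑ i : Fin (d+1), wf d m (i-1) = ∑ i, wf d m i :=
    Fintype.sum_equiv (Equiv.subRight (1 : Fin (d+1))) _ _ (fun i => rfl)
  have h3 : ∑ i : Fin (d+1), wf d m (i+1) = ∑ i, wf d m i :=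
    Fintype.sum_equiv (Equiv.addRight (1 : Fin (d+1))) _ _ (fun i => rfl)
  rw [Finset.sum_sub_distrib, Finset.sum_add_distrib, ← Finset.mul_sum, ← Finset.mul_sum,
    h2, h3] at h1
  linarith

theorem stmt13 (d : ℕ) (hd : 2 ≤ d) (hde : Even d) (m : ℝ) (hm : 0 < m) :
    (fun j : Fin (d+1) => if j = 0 then (1 : ℝ) else 0)
        ∈ convexHull ℝ (Set.range (vvecR d m))
      ↔ cseq m d ≤ m ^ (d - 1) := by
  have hval1 : ((1 : Fin (d+1))).val = 1 := by
    have : ((1 : Fin (d+1))).val = 1 % (d+1) := rfl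
    rw [this, Nat.mod_eq_of_lt (by omega)]
  have h1v : wf d m 1 = (m^(d-1) - cseq m d) * m^d / (Dq d m * m^(d-1)) := by
    simp only [wf, hval1, if_neg (by omega : ¬ (1:ℕ) = 0),
      show (1:ℕ)-1 = 0 from rfl, show d+1-1 = d from by omega, Nf_zero]
  constructor
  · intro hmem
    rw [mem_convexHull_iff_exists_fintype] at hmem
    obtain ⟨ι, hfin, wgt, z, hw0, hw1, hz, hx⟩ := hmem
    choose g hg using hz
    set μ : Fin (d+1) → ℝ := fun q => ∑ i, if g i = q then wgt i else 0 with hμ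
    have hμ0 : ∀ q, 0 ≤ μ q := fun q =>
      Finset.sum_nonneg fun i _ => by split_ifs; exacts [hw0 i, le_rfl]
    have hrepr : ∑ q, μ q • vvecR d m q
        = (fun j : Fin (d+1) => if j = 0 then (1:ℝ) else 0) := by
      rw [← hx]
      calc ∑ q, μ q • vvecR d m q
          = ∑ q, ∑ i, (if g i = q then wgt i else 0) • vvecR d m q := by
            simp only [hμ, Finset.sum_smul]
        _ = ∑ i, ∑ q, (if g i = q then wgt i else 0) • vvecR d m q := Finset.sum_comm
        _ = ∑ i, wgt i • vvecR d m (g i) := by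
            refine Finset.sum_congr rfl fun i _ => ?_
            simp [ite_smul, Finset.sum_ite_eq]
        _ = ∑ i, wgt i • z i := by
            refine Finset.sum_congr rfl fun i _ => ?_
            rw [hg i]
    have hE : ∀ p : Fin (d+1), μ p + m * μ (p-1) - m * μ (p+1) = if p = 0 then 1 else 0 := by
      intro p
      have hc := congrFun hrepr p
      rw [Finset.sum_apply] at hc
      simp only [Pi.smul_apply, smul_eq_mul] at hc
      rw [sum_coord d hd m μ p] at hc
      exact hc
    have hkey := wkey d hd hde m hm
    have E1 : ∑ p : Fin (d+1), wf d m (1 - p) * (μ p + m * μ (p-1) - m * μ (p+1))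
        = wf d m 1 := by
      rw [Finset.sum_congr rfl (fun p _ => by rw [hE p])]
      simp
    have E2 : ∑ p : Fin (d+1),
        μ p * (wf d m (1-p) + m * wf d m ((1-p)-1) - m * wf d m ((1-p)+1)) = μ 1 := by
      rw [Finset.sum_congr rfl (fun p _ => by rw [hkey (1-p)])]
      simp only [sub_eq_zero]
      simp [Finset.sum_ite_eq]
    have T1 : ∑ p : Fin (d+1), wf d m (1-p) * μ p = ∑ p : Fin (d+1), μ p * wf d m (1-p) :=
      Finset.sum_congr rfl fun p _ => mul_comm _ _
    have T2 : ∑ p : Fin (d+1), wf d m (1-p) * μ (p-1)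
        = ∑ p : Fin (d+1), μ p * wf d m ((1-p)-1) := by
      refine Fintype.sum_equiv (Equiv.subRight (1 : Fin (d+1))) _ _ fun p => ?_
      simp only [Equiv.subRight_apply]
      rw [show (1 - (p-1) : Fin (d+1)) - 1 = 1 - p from by abel, mul_comm]
    have T3 : ∑ p : Fin (d+1), wf d m (1-p) * μ (p+1)
        = ∑ p : Fin (d+1), μ p * wf d m ((1-p)+1) := by
      refine Fintype.sum_equiv (Equiv.addRight (1 : Fin (d+1))) _ _ fun p => ?_
      simp only [Equiv.coe_addRight]
      rw [show (1 - (p+1) : Fin (d+1)) + 1 = 1 - p from by abel, mul_comm]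
    simp only [mul_add, mul_sub, Finset.sum_add_distrib, Finset.sum_sub_distrib] at E1 E2
    have P1 : ∑ p : Fin (d+1), wf d m (1-p) * (m * μ (p-1))
        = m * ∑ p : Fin (d+1), wf d m (1-p) * μ (p-1) := by
      rw [Finset.mul_sum]; exact Finset.sum_congr rfl fun p _ => by ring
    have P2 : ∑ p : Fin (d+1), wf d m (1-p) * (m * μ (p+1))
        = m * ∑ p : Fin (d+1), wf d m (1-p) * μ (p+1) := by
      rw [Finset.mul_sum]; exact Finset.sum_congr rfl fun p _ => by ring
    have Q1 : ∑ p : Fin (d+1), μ p * (m * wf d m (1-p-1))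
        = m * ∑ p : Fin (d+1), μ p * wf d m (1-p-1) := by
      rw [Finset.mul_sum]; exact Finset.sum_congr rfl fun p _ => by ring
    have Q2 : ∑ p : Fin (d+1), μ p * (m * wf d m (1-p+1))
        = m * ∑ p : Fin (d+1), μ p * wf d m (1-p+1) := by
      rw [Finset.mul_sum]; exact Finset.sum_congr rfl fun p _ => by ring
    rw [P1, P2, T1, T2, T3] at E1
    rw [Q1, Q2] at E2
    have hμ1 : μ 1 = wf d m 1 := by rw [← E2, ← E1]
    have h0 := hμ0 1
    rw [hμ1, h1v] at h0
    have hDp := Dq_pos d m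
    have hmd : 0 < m^d := pow_pos hm d
    by_contra hc
    push_neg at hc
    have hneg : (m^(d-1) - cseq m d) * m^d / (Dq d m * m^(d-1)) < 0 :=
      div_neg_of_neg_of_pos (mul_neg_of_neg_of_pos (by linarith) hmd) (by positivity)
    linarith
  · intro hβ
    refine mem_convexHull_of_exists_fintype (wf d m) (vvecR d m)
      (wf_nonneg d m hm hβ) (wf_sum d hd hde m hm) (fun i => Set.mem_range_self i) ?_
    funext p
    rw [Finset.sum_apply]
    simp only [Pi.smul_apply, smul_eq_mul]
    rw [sum_coord d hd m (wf d m) p]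
    exact wkey d hd hde m hm p
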